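/- Let e ∈ ℝ^{m₁×m₂} be a probability distribution whose nonzero rows e(i,:) ∈ ℝ^{m₂} are linearly independent. For i ≠ i' define ẽ_{ii'} ∈ ℝ^{m₁×m₂} by ẽ_{ii'}(h,j) = −e(i,j) if h = i, e(i,j) if h = i', and 0 otherwise. Then the nonzero vectors among {ẽ_{ii'}} are linearly independent, and consequently there exists G ∈ ℝ^{m₁×m₂} with ẽ_{ii'}' G < 0 for all pairs (i,i') with ẽ_{ii'} ≠ 0. -/

import Mathlib

open Finset in
theorem dual_exists (m₂ : ℕ) (ι : Type) [Fintype ι] [DecidableEq ι] (v : ι → (Fin m₂ → ℝ))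
    (hli : LinearIndependent ℝ v) :
    ∃ w : ι → (Fin m₂ → ℝ), ∀ a b : ι, ∑ j, v a j * w b j = if b = a then 1 else 0 := by
  classical
  have hinj := hli.injective
  have hli' := hli.linearIndepOn_id
  let B := Module.Basis.extend hli'
  have hmem : ∀ a : ι, v a ∈ hli'.extend (Set.subset_univ _) := by
    intro a
    exact hli'.subset_extend _ ⟨a, rfl⟩
  let f : ι → ((Fin m₂ → ℝ) →ₗ[ℝ] ℝ) := fun a => B.coord ⟨v a, hmem a⟩
  have hf : ∀ a b : ι, f b (v a) = if b = a then 1 else 0 := by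
    intro a b
    have h1 : v a = B ⟨v a, hmem a⟩ := (Module.Basis.extend_apply_self hli' ⟨v a, hmem a⟩).symm
    rw [h1]
    simp only [f, Module.Basis.coord_apply, Module.Basis.repr_self]
    rw [Finsupp.single_apply]
    by_cases h : b = a
    · simp [h]
    · have hne : (⟨v a, hmem a⟩ : hli'.extend (Set.subset_univ _)) ≠ ⟨v b, hmem b⟩ := by
        intro hc
        exact h (hinj (congrArg Subtype.val hc)).symm
      simp [hne, h]
  refine ⟨fun b j => f b (Pi.single j 1), fun a b => ?_⟩
  rw [← hf a b]
  have hx : v a = ∑ j, v a j • (Pi.single j (1:ℝ) : Fin m₂ → ℝ) := by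
    funext k
    rw [Finset.sum_apply]
    simp [Pi.single_apply]
  conv_rhs => rw [hx]
  rw [map_sum]
  simp [map_smul, mul_comm]

/-- The vector ẽ_{ii'} associated to distribution `e` and pair of actions `i ≠ i'`. -/
def te {m₁ m₂ : ℕ} (e : Matrix (Fin m₁) (Fin m₂) ℝ) (i i' : Fin m₁) :
    Matrix (Fin m₁) (Fin m₂) ℝ :=
  Matrix.of fun h j => if h = i then -e i j else if h = i' then e i j else 0

theorem stmt_18 (m₁ m₂ : ℕ) (e : Matrix (Fin m₁) (Fin m₂) ℝ)
    (he : ∀ i j, 0 ≤ e i j) (hsum : ∑ i, ∑ j, e i j = 1)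
    (hli : LinearIndependent ℝ (fun i : {i : Fin m₁ // e i ≠ 0} => e i.1)) :
    LinearIndependent ℝ
      (fun p : {p : Fin m₁ × Fin m₁ // p.1 ≠ p.2 ∧ te e p.1 p.2 ≠ 0} =>
        te e p.1.1 p.1.2) ∧
    ∃ G : Matrix (Fin m₁) (Fin m₂) ℝ, ∀ i i' : Fin m₁, i ≠ i' → te e i i' ≠ 0 →
      ∑ h, ∑ j, te e i i' h j * G h j < 0 := by
  classical
  have hte_zero : ∀ i i' : Fin m₁, e i = 0 → te e i i' = 0 := by
    intro i i' h
    ext a b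
    have : e i b = 0 := congrFun h b
    simp [te, this]
  have hte_ne : ∀ i i' : Fin m₁, te e i i' ≠ 0 → e i ≠ 0 :=
    fun i i' h h' => h (hte_zero i i' h')
  set P := {p : Fin m₁ × Fin m₁ // p.1 ≠ p.2 ∧ te e p.1 p.2 ≠ 0} with hP
  constructor
  · rw [Fintype.linearIndependent_iff]
    intro g hg p₀
    obtain ⟨⟨i, i'⟩, hne, hte⟩ := p₀
    have hei : e i ≠ 0 := hte_ne _ _ hte
    -- row i' of the relation
    have hv : ∑ p : P, g p • (fun j => te e p.1.1 p.1.2 i' j) = (0 : Fin m₂ → ℝ) := by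
      funext j
      have h1 := congrFun (congrFun hg i') j
      rw [Finset.sum_apply]
      simpa [Matrix.sum_apply] using h1
    -- coefficient function
    set k : P → ℝ := fun p => if p.1.1 = i' then (-1:ℝ) else if p.1.2 = i' then 1 else 0
      with hk
    have hv_eq : ∀ p : P, (fun j => te e p.1.1 p.1.2 i' j) = k p • e p.1.1 := by
      rintro ⟨⟨a, b⟩, hab, _⟩
      funext j
      simp only [te, Matrix.of_apply, hk, Pi.smul_apply, smul_eq_mul]
      by_cases h1 : a = i'
      · subst h1
        simp [hab.symm]  -- i' ≠ b? hab : a ≠ b i.e. i' ≠ b; condition i' = a true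
      · by_cases h2 : b = i'
        · subst h2
          simp [Ne.symm h1, h1]
        · rw [if_neg h1, if_neg h2, if_neg (fun hc : i' = a => h1 hc.symm),
            if_neg (fun hc : i' = b => h2 hc.symm), zero_mul]
    set c : {i : Fin m₁ // e i ≠ 0} → ℝ :=
      fun a => ∑ p : P, if p.1.1 = a.1 then g p * k p else 0 with hc
    have hcsum : ∑ a : {i : Fin m₁ // e i ≠ 0}, c a • e a.1 = 0 := by
      have : ∀ a : {i : Fin m₁ // e i ≠ 0},
          c a • e a.1 = ∑ p : P, (if p.1.1 = a.1 then g p * k p else 0) • e a.1 := by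
        intro a; rw [hc]; rw [Finset.sum_smul]
      rw [Finset.sum_congr rfl (fun a _ => this a), Finset.sum_comm]
      conv_rhs => rw [← hv]
      refine Finset.sum_congr rfl ?_
      intro p _
      have hep : e p.1.1 ≠ 0 := hte_ne _ _ p.2.2
      rw [Finset.sum_eq_single (⟨p.1.1, hep⟩ : {i : Fin m₁ // e i ≠ 0})]
      · rw [hv_eq p, if_pos rfl, smul_smul]
      · intro b _ hb
        rw [if_neg, zero_smul]
        intro hc'
        exact hb (Subtype.ext hc'.symm)
      · intro h; exact absurd (Finset.mem_univ _) h
    have hall := Fintype.linearIndependent_iff.mp hli c hcsum ⟨i, hei⟩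
    have hall' : ∑ p : P, (if p.1.1 = i then g p * k p else 0) = 0 := by
      simpa [hc] using hall
    rw [← hall', Finset.sum_eq_single (⟨(i, i'), hne, hte⟩ : P)]
    · rw [if_pos rfl, hk]
      simp [hne]
    · rintro ⟨⟨a, b⟩, hab, htab⟩ _ hb
      by_cases h1 : a = i
      · subst h1
        rw [if_pos rfl, hk]
        simp only
        rw [if_neg hne]
        by_cases h2 : b = i'
        · subst h2; exact absurd rfl hb
        · rw [if_neg h2, mul_zero]
      · rw [if_neg h1]
    · intro h; exact absurd (Finset.mem_univ _) h
  · -- existence of G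
    obtain ⟨w, hw⟩ := dual_exists m₂ {i : Fin m₁ // e i ≠ 0} (fun a => e a.1) hli
    refine ⟨Matrix.of fun h j => if hh : e h ≠ 0 then w ⟨h, hh⟩ j else 0, ?_⟩
    intro i i' hne hte
    have hei : e i ≠ 0 := hte_ne _ _ hte
    set G : Matrix (Fin m₁) (Fin m₂) ℝ :=
      Matrix.of fun h j => if hh : e h ≠ 0 then w ⟨h, hh⟩ j else 0 with hG
    have key : ∀ j, ∑ h, te e i i' h j * G h j = -(e i j) * G i j + e i j * G i' j := by
      intro j
      have : ∀ h, te e i i' h j * G h j =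
          (if h = i then -(e i j) * G i j else 0) + (if h = i' then e i j * G i' j else 0) := by
        intro h
        simp only [te, Matrix.of_apply]
        by_cases h1 : h = i
        · subst h1; rw [if_pos rfl, if_pos rfl, if_neg hne, add_zero]
        · rw [if_neg h1, if_neg h1]
          by_cases h2 : h = i'
          · subst h2; rw [if_pos rfl, if_pos rfl, zero_add]
          · rw [if_neg h2, if_neg h2, zero_mul, add_zero]
      rw [Finset.sum_congr rfl (fun h _ => this h), Finset.sum_add_distrib,
        Finset.sum_ite_eq' Finset.univ i, Finset.sum_ite_eq' Finset.univ i',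
        if_pos (Finset.mem_univ _), if_pos (Finset.mem_univ _)]
    rw [Finset.sum_comm, Finset.sum_congr rfl (fun j _ => key j), Finset.sum_add_distrib]
    have h1 : ∑ j, -(e i j) * G i j = -1 := by
      have : ∀ j, G i j = w ⟨i, hei⟩ j := by intro j; simp [hG, hei]
      calc ∑ j, -(e i j) * G i j = -(∑ j, e i j * w ⟨i, hei⟩ j) := by
            rw [← Finset.sum_neg_distrib]
            exact Finset.sum_congr rfl fun j _ => by rw [this j, neg_mul]
        _ = -1 := by rw [hw ⟨i, hei⟩ ⟨i, hei⟩, if_pos rfl]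
    have h2 : ∑ j, e i j * G i' j = 0 := by
      by_cases hei' : e i' ≠ 0
      · have : ∀ j, G i' j = w ⟨i', hei'⟩ j := by intro j; simp [hG, hei']
        rw [Finset.sum_congr rfl (fun j _ => by rw [this j])]
        rw [hw ⟨i, hei⟩ ⟨i', hei'⟩, if_neg]
        intro hc
        exact hne (congrArg Subtype.val hc).symm
      · have : ∀ j, G i' j = 0 := by intro j; simp [hG, hei']
        simp [this]
    rw [h1, h2]
    norm_num
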